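/- For any finite set X ⊂ ℝ^{d_0}, any ε > 0, any Step+Id network f with L hidden layers of widths d_1, …, d_L, input dimension d_0 and output dimension 1, and any sigmoidal activation function σ, there exists a σ network g with the same architecture (L hidden layers of widths d_1, …, d_L, input dimension d_0, output dimension 1) such that |f(x) − g(x)| < ε for all x ∈ X. -/

import Mathlib

open Real Filter

noncomputable section

/-- A sigmoidal activation function. -/
def Sigmoidal (σ : ℝ → ℝ) : Prop :=
  (∃ a b : ℝ, Tendsto σ atBot (nhds a) ∧ Tendsto σ atTop (nhds b) ∧ a ≠ b) ∧
  (∃ z : ℝ, ContDiffAt ℝ 1 σ z ∧ deriv σ z ≠ 0)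

/-- `f` is an affine map between finite-dimensional coordinate spaces. -/
def IsAffineVecMap {m n : ℕ} (t : (Fin m → ℝ) → (Fin n → ℝ)) : Prop :=
  ∃ (W : Matrix (Fin n) (Fin m) ℝ) (b : Fin n → ℝ), ∀ x, t x = W.mulVec x + b

/-- A `σ` network with hidden layer widths `ws`. -/
def IsNet (σ : ℝ → ℝ) : (din : ℕ) → (ws : List ℕ) → (dout : ℕ) →
    ((Fin din → ℝ) → (Fin dout → ℝ)) → Prop
  | _, [], _, f => IsAffineVecMap f
  | din, d :: ds, dout, f =>
      ∃ (t : (Fin din → ℝ) → (Fin d → ℝ)) (g : (Fin d → ℝ) → (Fin dout → ℝ)),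
        IsAffineVecMap t ∧ IsNet σ d ds dout g ∧ ∀ x, f x = g (fun i => σ (t x i))

/-- The binary threshold (step) function. -/
def stepFun (x : ℝ) : ℝ := if 0 ≤ x then 1 else 0

/-- A `Step`+`Id` network: each hidden neuron applies either `Step` or `Id`. -/
def IsStepIdNet : (din : ℕ) → (ws : List ℕ) → (dout : ℕ) →
    ((Fin din → ℝ) → (Fin dout → ℝ)) → Prop
  | _, [], _, f => IsAffineVecMap f
  | din, d :: ds, dout, f =>
      ∃ (t : (Fin din → ℝ) → (Fin d → ℝ)) (φ : Fin d → Bool)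
        (g : (Fin d → ℝ) → (Fin dout → ℝ)),
        IsAffineVecMap t ∧ IsStepIdNet d ds dout g ∧
        ∀ x, f x = g (fun i => if φ i then stepFun (t x i) else t x i)

/-- Number of parameters `Σ_ℓ d_{ℓ+1}(d_ℓ + 1)`. -/
def paramCount : (din : ℕ) → (ws : List ℕ) → (dout : ℕ) → ℕ
  | din, [], dout => dout * (din + 1)
  | din, d :: ds, dout => d * (din + 1) + paramCount d ds dout

/-- Euclidean norm on `Fin d → ℝ`. -/
def eNorm {d : ℕ} (x : Fin d → ℝ) : ℝ := Real.sqrt (∑ i, (x i) ^ 2)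

/-- Euclidean inner product. -/
def eDot {d : ℕ} (u v : Fin d → ℝ) : ℝ := ∑ i, u i * v i

/-- A finite set is `Δ`-separated: the largest pairwise distance is less than
`Δ` times the smallest pairwise distance. -/
def Separated (Δ : ℝ) {d : ℕ} (X : Finset (Fin d → ℝ)) : Prop :=
  ∀ x ∈ X, ∀ x' ∈ X, ∀ z ∈ X, ∀ z' ∈ X, x ≠ x' → z ≠ z' →
    eNorm (x - x') < Δ * eNorm (z - z')

lemma affine_comp {m n p : ℕ} {t : (Fin m → ℝ) → (Fin n → ℝ)} {s : (Fin n → ℝ) → (Fin p → ℝ)}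
    (ht : IsAffineVecMap t) (hs : IsAffineVecMap s) : IsAffineVecMap (fun x => s (t x)) := by
  obtain ⟨W1, b1, h1⟩ := ht
  obtain ⟨W2, b2, h2⟩ := hs
  refine ⟨W2 * W1, W2.mulVec b1 + b2, fun x => ?_⟩
  show s (t x) = _
  rw [h2, h1, Matrix.mulVec_add, ← Matrix.mulVec_mulVec, add_assoc]

lemma affine_lip {m n : ℕ} (W : Matrix (Fin n) (Fin m) ℝ) {x y : Fin m → ℝ} {δ : ℝ}
    (hδ : 0 ≤ δ) (h : ∀ k, |x k - y k| ≤ δ) (i : Fin n) :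
    |W.mulVec x i - W.mulVec y i| ≤ (∑ j, ∑ k, |W j k|) * δ := by
  have h1 : W.mulVec x i - W.mulVec y i = ∑ k, W i k * (x k - y k) := by
    simp [Matrix.mulVec, dotProduct, mul_sub, Finset.sum_sub_distrib]
  rw [h1]
  calc |∑ k, W i k * (x k - y k)| ≤ ∑ k, |W i k * (x k - y k)| := Finset.abs_sum_le_sum_abs _ _
    _ ≤ ∑ k, |W i k| * δ := by
        refine Finset.sum_le_sum fun k _ => ?_
        rw [abs_mul]
        exact mul_le_mul_of_nonneg_left (h k) (abs_nonneg _)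
    _ = (∑ k, |W i k|) * δ := by rw [Finset.sum_mul]
    _ ≤ (∑ j, ∑ k, |W j k|) * δ := by
        refine mul_le_mul_of_nonneg_right ?_ hδ
        exact Finset.single_le_sum (fun j _ => Finset.sum_nonneg fun k _ => abs_nonneg (W j k)) (Finset.mem_univ i)

lemma affine_diag {n : ℕ} (c e : Fin n → ℝ) :
    IsAffineVecMap (fun (w : Fin n → ℝ) i => c i * w i + e i) := by
  refine ⟨Matrix.diagonal c, e, fun w => ?_⟩
  funext i
  simp [Matrix.mulVec_diagonal]

lemma isNet_comp_affine {σ : ℝ → ℝ} {d dout : ℕ} {ds : List ℕ}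
    {g : (Fin d → ℝ) → (Fin dout → ℝ)} {A : (Fin d → ℝ) → (Fin d → ℝ)}
    (hg : IsNet σ d ds dout g) (hA : IsAffineVecMap A) :
    IsNet σ d ds dout (fun w => g (A w)) := by
  cases ds with
  | nil => exact affine_comp hA hg
  | cons e es =>
      obtain ⟨t2, gt, ht2, hgt, heq⟩ := hg
      exact ⟨fun w => t2 (A w), gt, affine_comp hA ht2, hgt, fun x => heq (A x)⟩

lemma id_approx (σ : ℝ → ℝ) (z : ℝ) (hz : HasDerivAt σ (deriv σ z) z) (hz' : deriv σ z ≠ 0)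
    (M δ₁ : ℝ) (hM : 0 ≤ M) (hδ₁ : 0 < δ₁) :
    ∃ h : ℝ, 0 < h ∧ ∀ u : ℝ, |u| ≤ M → |(σ (z + h * u) - σ z) / (h * deriv σ z) - u| < δ₁ := by
  have hd : 0 < |deriv σ z| := abs_pos.mpr hz'
  set c : ℝ := δ₁ * |deriv σ z| / (2 * (M + 1)) with hc
  have hcpos : 0 < c := by positivity
  have hlo := (hasDerivAt_iff_isLittleO.mp hz).def hcpos
  rw [Metric.eventually_nhds_iff] at hlo
  obtain ⟨r, hr, hball⟩ := hlo
  refine ⟨r / (2 * (M + 1)), by positivity, fun u hu => ?_⟩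
  set h : ℝ := r / (2 * (M + 1)) with hh
  have hhpos : 0 < h := by positivity
  have hdist : dist (z + h * u) z < r := by
    rw [Real.dist_eq]
    have : |z + h * u - z| = h * |u| := by
      rw [show z + h * u - z = h * u by ring, abs_mul, abs_of_pos hhpos]
    rw [this]
    calc h * |u| ≤ h * M := by
          exact mul_le_mul_of_nonneg_left hu hhpos.le
      _ < r := by
          rw [hh]
          rw [div_mul_eq_mul_div, div_lt_iff₀ (by positivity)]
          nlinarith
  have hb := hball hdist
  simp only [Real.norm_eq_abs, smul_eq_mul, show z + h * u - z = h * u by ring] at hb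
  have key : |(σ (z + h * u) - σ z) / (h * deriv σ z) - u|
      = |σ (z + h * u) - σ z - h * u * deriv σ z| / (h * |deriv σ z|) := by
    rw [show (σ (z + h * u) - σ z) / (h * deriv σ z) - u
        = (σ (z + h * u) - σ z - h * u * deriv σ z) / (h * deriv σ z) by
          field_simp]
    rw [abs_div, abs_mul, abs_of_pos hhpos]
  rw [key]
  rw [div_lt_iff₀ (by positivity)]
  calc |σ (z + h * u) - σ z - h * u * deriv σ z| ≤ c * |h * u| := hb
    _ = c * h * |u| := by rw [abs_mul, abs_of_pos hhpos]; ring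
    _ ≤ c * h * M := by
        refine mul_le_mul_of_nonneg_left hu (by positivity)
    _ < δ₁ * (h * |deriv σ z|) := by
        have h1 : c * M < δ₁ * |deriv σ z| := by
          rw [hc, div_mul_eq_mul_div, div_lt_iff₀ (by positivity)]
          nlinarith [mul_pos hδ₁ hd]
        nlinarith [mul_lt_mul_of_pos_right h1 hhpos]

lemma step_approx (σ : ℝ → ℝ) (a b : ℝ) (ha : Tendsto σ atBot (nhds a))
    (hb : Tendsto σ atTop (nhds b)) (hab : a ≠ b) (η δ₁ : ℝ) (hη : 0 < η) (hδ₁ : 0 < δ₁) :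
    ∃ N : ℝ, 0 < N ∧
      (∀ u : ℝ, -η / 8 ≤ u → |(σ (N * u + N * η / 4) - a) / (b - a) - 1| < δ₁) ∧
      (∀ u : ℝ, u ≤ -7 * η / 8 → |(σ (N * u + N * η / 4) - a) / (b - a)| < δ₁) := by
  have hba : (0:ℝ) < |b - a| := abs_pos.mpr (sub_ne_zero.mpr (Ne.symm hab))
  have hε : 0 < δ₁ * |b - a| := by positivity
  have hTop : ∃ M : ℝ, ∀ x ≥ M, |σ x - b| < δ₁ * |b - a| := by
    have h2 : ∀ᶠ x in atTop, |σ x - b| < δ₁ * |b - a| := by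
      filter_upwards [hb (Metric.ball_mem_nhds b hε)] with x hx
      simpa [Real.dist_eq] using hx
    rw [eventually_atTop] at h2
    exact h2
  have hBot : ∃ M : ℝ, ∀ x ≤ M, |σ x - a| < δ₁ * |b - a| := by
    have h2 : ∀ᶠ x in atBot, |σ x - a| < δ₁ * |b - a| := by
      filter_upwards [ha (Metric.ball_mem_nhds a hε)] with x hx
      simpa [Real.dist_eq] using hx
    rw [eventually_atBot] at h2
    exact h2
  obtain ⟨Mp, hMp⟩ := hTop
  obtain ⟨Mm, hMm⟩ := hBot
  refine ⟨1 + (8 / η) * (|Mp| + |Mm|), by positivity, ?_, ?_⟩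
  all_goals intro u hu
  · set N : ℝ := 1 + (8 / η) * (|Mp| + |Mm|) with hN
    have hNpos : 0 < N := by positivity
    have harg : N * u + N * η / 4 ≥ Mp := by
      have h1 : N * u ≥ N * (-η / 8) := mul_le_mul_of_nonneg_left hu hNpos.le
      have h2 : N * η / 8 = η / 8 + (|Mp| + |Mm|) := by
        rw [hN]; field_simp
      nlinarith [le_abs_self Mp, abs_nonneg Mm, abs_nonneg Mp]
    have hσ := hMp _ harg
    have heq : (σ (N * u + N * η / 4) - a) / (b - a) - 1
        = (σ (N * u + N * η / 4) - b) / (b - a) := by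
      generalize σ (N * u + N * η / 4) = s
      have : b - a ≠ 0 := sub_ne_zero.mpr (Ne.symm hab)
      field_simp
      ring
    rw [heq, abs_div]
    rw [div_lt_iff₀ hba]
    calc |σ (N * u + N * η / 4) - b| < δ₁ * |b - a| := hσ
      _ = δ₁ * |b - a| := rfl
  · set N : ℝ := 1 + (8 / η) * (|Mp| + |Mm|) with hN
    have hNpos : 0 < N := by positivity
    have harg : N * u + N * η / 4 ≤ Mm := by
      have h1 : N * u ≤ N * (-7 * η / 8) := mul_le_mul_of_nonneg_left hu hNpos.le
      have h2 : N * η / 8 = η / 8 + (|Mp| + |Mm|) := by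
        rw [hN]; field_simp
      nlinarith [neg_abs_le Mm, abs_nonneg Mm, abs_nonneg Mp]
    have hσ := hMm _ harg
    rw [abs_div]
    rw [div_lt_iff₀ hba]
    exact hσ

lemma key_lemma (σ : ℝ → ℝ) (hσ : Sigmoidal σ) (ws : List ℕ) :
    ∀ (din dout : ℕ) (g : (Fin din → ℝ) → (Fin dout → ℝ)),
      IsStepIdNet din ws dout g → ∀ (Y : Finset (Fin din → ℝ)) (ε : ℝ), 0 < ε →
      ∃ δ : ℝ, 0 < δ ∧ ∃ g', IsNet σ din ws dout g' ∧
        ∀ y ∈ Y, ∀ y' : Fin din → ℝ, (∀ i, |y' i - y i| ≤ δ) →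
          ∀ j, |g y j - g' y' j| < ε := by
  induction ws with
  | nil =>
      intro din dout g hg Y ε hε
      obtain ⟨W, b, hWb⟩ := hg
      set C : ℝ := ∑ j, ∑ k, |W j k| with hC
      have hC0 : 0 ≤ C := Finset.sum_nonneg fun j _ => Finset.sum_nonneg fun k _ => abs_nonneg _
      refine ⟨ε / (2 * (C + 1)), by positivity, g, ⟨W, b, hWb⟩, fun y _ y' hy' j => ?_⟩
      have h1 : g y j - g y' j = W.mulVec y j - W.mulVec y' j := by
        rw [hWb y, hWb y']; simp
      rw [h1]
      calc |W.mulVec y j - W.mulVec y' j| ≤ C * (ε / (2 * (C + 1))) :=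
            affine_lip W (by positivity) (fun k => by rw [abs_sub_comm]; exact hy' k) j
        _ < ε := by
            rw [mul_div_assoc']
            rw [div_lt_iff₀ (by positivity)]
            nlinarith
  | cons d ds ih =>
      intro din dout g hg Y ε hε
      obtain ⟨t, φ, gt, ⟨W, b0, hW⟩, hgt, heq⟩ := hg
      obtain ⟨⟨a, b, ha, hb, hab⟩, z, hz, hz'⟩ := hσ
      have hderiv : HasDerivAt σ (deriv σ z) z := (hz.differentiableAt one_ne_zero).hasDerivAt
      set act : (Fin din → ℝ) → (Fin d → ℝ) :=
        fun y i => if φ i then stepFun (t y i) else t y i with hact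
      obtain ⟨δ₁, hδ₁, g'', hg''net, hg''⟩ := ih d dout gt hgt (Y.image act) ε hε
      -- bound on |t y i|
      set M : ℝ := ∑ y ∈ Y, ∑ i, |t y i| with hM
      have hMb : ∀ y ∈ Y, ∀ i, |t y i| ≤ M := by
        intro y hy i
        calc |t y i| ≤ ∑ i, |t y i| :=
              Finset.single_le_sum (fun k _ => abs_nonneg (t y k)) (Finset.mem_univ i)
          _ ≤ M := Finset.single_le_sum
              (fun y _ => Finset.sum_nonneg fun k _ => abs_nonneg (t y k)) hy
      have hM0 : 0 ≤ M := Finset.sum_nonneg fun y _ => Finset.sum_nonneg fun k _ => abs_nonneg _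
      -- gap η for negative step inputs
      obtain ⟨η, hη, hηb⟩ : ∃ η : ℝ, 0 < η ∧ ∀ y ∈ Y, ∀ i, t y i < 0 → t y i ≤ -η := by
        classical
        set T : Finset ℝ := ((Y ×ˢ (Finset.univ : Finset (Fin d))).filter
          (fun p => t p.1 p.2 < 0)).image (fun p => -(t p.1 p.2)) with hT
        by_cases hne : T.Nonempty
        · refine ⟨T.min' hne, ?_, ?_⟩
          · obtain ⟨p, hp, hpe⟩ := Finset.mem_image.mp (T.min'_mem hne)
            have := (Finset.mem_filter.mp hp).2
            rw [← hpe]; linarith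
          · intro y hy i hneg
            have hmem : -(t y i) ∈ T := Finset.mem_image.mpr
              ⟨(y, i), Finset.mem_filter.mpr
                ⟨Finset.mem_product.mpr ⟨hy, Finset.mem_univ i⟩, hneg⟩, rfl⟩
            have := T.min'_le _ hmem
            linarith
        · refine ⟨1, one_pos, fun y hy i hneg => absurd ?_ hne⟩
          exact ⟨-(t y i), Finset.mem_image.mpr ⟨(y, i), Finset.mem_filter.mpr
            ⟨Finset.mem_product.mpr ⟨hy, Finset.mem_univ i⟩, hneg⟩, rfl⟩⟩
      set δ₂ : ℝ := min (η / 8) (min 1 (δ₁ / 2)) with hδ₂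
      have hδ₂pos : 0 < δ₂ := lt_min (by linarith) (lt_min one_pos (by linarith))
      have hδ₂η : δ₂ ≤ η / 8 := min_le_left _ _
      have hδ₂1 : δ₂ ≤ 1 := le_trans (min_le_right _ _) (min_le_left _ _)
      have hδ₂δ₁ : δ₂ ≤ δ₁ / 2 := le_trans (min_le_right _ _) (min_le_right _ _)
      obtain ⟨N, hN, hstep1, hstep0⟩ := step_approx σ a b ha hb hab η δ₁ hη hδ₁
      obtain ⟨h, hh, hid⟩ := id_approx σ z hderiv hz' (M + 1) (δ₁ / 2)
        (by linarith) (by linarith)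
      set t' : (Fin din → ℝ) → (Fin d → ℝ) :=
        fun x i => if φ i then N * t x i + N * η / 4 else h * t x i + z with ht'def
      have ht' : IsAffineVecMap t' := by
        obtain ⟨W', b', h'⟩ := affine_comp ⟨W, b0, hW⟩
          (affine_diag (fun i => if φ i then N else h)
            (fun i => if φ i then N * η / 4 else z))
        refine ⟨W', b', fun x => ?_⟩
        rw [← h' x]
        funext i
        by_cases hφ : φ i <;> simp [ht'def, hφ]
      set A : (Fin d → ℝ) → (Fin d → ℝ) :=
        fun w i => if φ i then (w i - a) / (b - a)
          else (w i - σ z) / (h * deriv σ z) with hAdef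
      have hA : IsAffineVecMap A := by
        obtain ⟨W', b', h'⟩ := affine_diag
          (fun i => if φ i then (b - a)⁻¹ else (h * deriv σ z)⁻¹)
          (fun i => if φ i then -(a * (b - a)⁻¹) else -(σ z * (h * deriv σ z)⁻¹))
        refine ⟨W', b', fun w => ?_⟩
        rw [← h' w]
        funext i
        by_cases hφ : φ i <;> simp [hAdef, hφ, div_eq_mul_inv] <;> ring
      set C : ℝ := ∑ j, ∑ k, |W j k| with hC
      have hC0 : 0 ≤ C := Finset.sum_nonneg fun j _ => Finset.sum_nonneg fun k _ => abs_nonneg _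
      refine ⟨δ₂ / (2 * (C + 1)), by positivity, fun x => g'' (A (fun i => σ (t' x i))), ?_, ?_⟩
      · exact ⟨t', fun w => g'' (A w), ht', isNet_comp_affine hg''net hA, fun x => rfl⟩
      · intro y hy y' hy' j
        have htc : ∀ i, |t y' i - t y i| ≤ δ₂ / 2 := by
          intro i
          have h1 : t y' i - t y i = W.mulVec y' i - W.mulVec y i := by
            rw [hW y', hW y]; simp
          rw [h1]
          calc |W.mulVec y' i - W.mulVec y i| ≤ C * (δ₂ / (2 * (C + 1))) :=
                affine_lip W (by positivity) hy' i
            _ ≤ δ₂ / 2 := by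
                rw [mul_div_assoc']
                rw [div_le_div_iff₀ (by positivity) (by norm_num)]
                nlinarith
        have hkey : ∀ i, |A (fun i => σ (t' y' i)) i - act y i| ≤ δ₁ := by
          intro i
          by_cases hφ : φ i
          · have hAi : A (fun i => σ (t' y' i)) i
                = (σ (N * t y' i + N * η / 4) - a) / (b - a) := by
              simp [hAdef, ht'def, hφ]
            by_cases hpos : 0 ≤ t y i
            · have hu : -η / 8 ≤ t y' i := by
                have := htc i
                have := abs_le.mp this
                nlinarith
              have := hstep1 (t y' i) hu
              have hacti : act y i = 1 := by simp [hact, hφ, stepFun, hpos]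
              rw [hAi, hacti]
              linarith [this.le]
            · push_neg at hpos
              have hle : t y i ≤ -η := hηb y hy i hpos
              have hu : t y' i ≤ -7 * η / 8 := by
                have := abs_le.mp (htc i)
                nlinarith
              have := hstep0 (t y' i) hu
              have hacti : act y i = 0 := by
                simp [hact, hφ, stepFun, not_le.mpr hpos]
              rw [hAi, hacti, sub_zero]
              linarith [this.le]
          · have hAi : A (fun i => σ (t' y' i)) i
                = (σ (z + h * t y' i) - σ z) / (h * deriv σ z) := by
              simp [hAdef, ht'def, hφ, add_comm]
            have hub : |t y' i| ≤ M + 1 := by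
              have h1 := abs_le.mp (htc i)
              have h2 := abs_le.mp (hMb y hy i)
              rw [abs_le]
              constructor <;> nlinarith
            have hclose := hid (t y' i) hub
            have hacti : act y i = t y i := by simp [hact, hφ]
            rw [hAi, hacti]
            have h3 := abs_le.mp (htc i)
            have h4 := abs_sub_abs_le_abs_sub ((σ (z + h * t y' i) - σ z) / (h * deriv σ z)) (t y' i)
            calc |(σ (z + h * t y' i) - σ z) / (h * deriv σ z) - t y i|
                ≤ |(σ (z + h * t y' i) - σ z) / (h * deriv σ z) - t y' i|
                  + |t y' i - t y i| := by
                  have := abs_sub_le ((σ (z + h * t y' i) - σ z) / (h * deriv σ z))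
                    (t y' i) (t y i)
                  linarith
              _ ≤ δ₁ := by
                  have := htc i
                  linarith [hclose.le]
        have hmem : act y ∈ Y.image act := Finset.mem_image_of_mem act hy
        have hfinal := hg'' (act y) hmem (A (fun i => σ (t' y' i))) hkey j
        rw [heq y]
        exact hfinal

/-- Lemma 5: any Step+Id network can be approximated on a
finite set by a sigmoidal network of the same architecture. -/
theorem statement_11 (d0 : ℕ) (X : Finset (Fin d0 → ℝ)) (ε : ℝ) (hε : 0 < ε)
    (ws : List ℕ) (f : (Fin d0 → ℝ) → (Fin 1 → ℝ)) (hf : IsStepIdNet d0 ws 1 f)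
    (σ : ℝ → ℝ) (hσ : Sigmoidal σ) :
    ∃ g : (Fin d0 → ℝ) → (Fin 1 → ℝ), IsNet σ d0 ws 1 g ∧
      ∀ x ∈ X, |f x 0 - g x 0| < ε := by
  obtain ⟨δ, hδ, g, hnet, hg⟩ := key_lemma σ hσ ws d0 1 f hf X ε hε
  exact ⟨g, hnet, fun x hx => hg x hx x (fun i => by simp [hδ.le]) 0⟩
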